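/- For every integer n ≥ 2, ∑_{i=1}^{⌊√n⌋} (n/i)/log(n/i) ≥ n·log 2, where log is the natural logarithm. -/

import Mathlib

open Real Finset

private lemma log_two_sq_le : Real.log 2 ^ 2 ≤ 0.481 := by
  nlinarith [Real.log_two_lt_d9, Real.log_pos (by norm_num : (1:ℝ) < 2)]

private lemma log_le_mul_log_two {x : ℝ} (k : ℕ) (hx : 0 < x) (h : x ≤ 2 ^ k) :
    Real.log x ≤ (k : ℝ) * Real.log 2 := by
  calc Real.log x ≤ Real.log (2 ^ k) := Real.log_le_log hx h
    _ = (k : ℝ) * Real.log 2 := by rw [Real.log_pow]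

/-- For every `n ≥ 2`, `∑_{i=1}^{⌊√n⌋} (n/i)/log(n/i) ≥ n·log 2`. -/
theorem sum_div_log_ge (n : ℕ) (hn : 2 ≤ n) :
    (n : ℝ) * Real.log 2 ≤
      ∑ i ∈ Finset.Icc 1 (Nat.sqrt n), ((n : ℝ) / i) / Real.log ((n : ℝ) / i) := by
  set s := Nat.sqrt n with hs
  have hs1 : 1 ≤ s := by
    rw [hs]; exact Nat.sqrt_pos.mpr (by omega)
  have hsn : s ≤ n := Nat.sqrt_le_self n
  have hnpos : (0:ℝ) < n := by positivity
  have hterm : ∀ i ∈ Finset.Icc 1 s, 0 ≤ ((n : ℝ) / i) / Real.log ((n : ℝ) / i) := by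
    intro i hi
    simp only [Finset.mem_Icc] at hi
    have hipos : (0:ℝ) < i := by exact_mod_cast hi.1
    have h1 : (1:ℝ) ≤ (n:ℝ) / i := by
      rw [le_div_iff₀ hipos]
      exact_mod_cast by omega
    exact div_nonneg (by linarith) (Real.log_nonneg h1)
  have key : ∀ k, k ≤ s → ∑ i ∈ Finset.Icc 1 k, ((n : ℝ) / i) / Real.log ((n : ℝ) / i)
      ≤ ∑ i ∈ Finset.Icc 1 s, ((n : ℝ) / i) / Real.log ((n : ℝ) / i) := by
    intro k hk
    apply Finset.sum_le_sum_of_subset_of_nonneg (Finset.Icc_subset_Icc_right hk)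
    intro i hi _
    exact hterm i hi
  have hl2p : (0:ℝ) < Real.log 2 := Real.log_pos (by norm_num)
  have tb : ∀ (i k : ℕ), 0 < i → (i:ℝ) < n → (n:ℝ) ≤ i * 2^k →
      ((n:ℝ)/i)/((k:ℝ) * Real.log 2) ≤ ((n:ℝ)/i)/Real.log ((n:ℝ)/i) := by
    intro i k hi h1 h2
    have hip : (0:ℝ) < i := by exact_mod_cast hi
    have h1' : 1 < (n:ℝ)/i := (one_lt_div hip).mpr h1
    have h2' : (n:ℝ)/i ≤ 2^k := by
      rw [div_le_iff₀ hip]; linarith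
    have hlp : 0 < Real.log ((n:ℝ)/i) := Real.log_pos h1'
    exact div_le_div_of_nonneg_left (by linarith) hlp (log_le_mul_log_two k (by linarith) h2')
  rcases le_or_gt n 12 with hsmall | hbig
  · -- small cases: 2 ≤ n ≤ 12
    rcases le_or_gt n 4 with h4 | h5
    · -- 2 ≤ n ≤ 4 : one term
      refine le_trans ?_ (key 1 hs1)
      rw [Finset.Icc_self, Finset.sum_singleton]
      have ht := tb 1 2 one_pos (by exact_mod_cast (by omega : 1 < n))
        (by push_cast; norm_num; exact_mod_cast h4)
      push_cast at ht ⊢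
      norm_num at ht ⊢
      have hL : Real.log 2 ≤ (1/2) / Real.log 2 := by
        rw [le_div_iff₀ hl2p]; nlinarith [log_two_sq_le]
      calc (n:ℝ) * Real.log 2 ≤ (n:ℝ) * ((1/2) / Real.log 2) :=
            mul_le_mul_of_nonneg_left hL hnpos.le
        _ = (n:ℝ)/(2 * Real.log 2) := by field_simp
        _ ≤ (n:ℝ)/Real.log n := ht
    · have hL : Real.log 2 ≤ (7/12) / Real.log 2 := by
        rw [le_div_iff₀ hl2p]; nlinarith [log_two_sq_le]
      rcases le_or_gt n 8 with h8 | h9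
      · -- 5 ≤ n ≤ 8 : two terms
        have hs2 : 2 ≤ s := by rw [hs]; exact Nat.le_sqrt.mpr (by omega)
        refine le_trans ?_ (key 2 hs2)
        rw [show Finset.Icc (1:ℕ) 2 = {1, 2} from rfl, Finset.sum_pair (by norm_num)]
        have ht1 := tb 1 3 one_pos (by exact_mod_cast (by omega : 1 < n))
          (by push_cast; norm_num; exact_mod_cast h8)
        have ht2 := tb 2 2 two_pos (by exact_mod_cast (by omega : 2 < n))
          (by push_cast; norm_num; exact_mod_cast (by omega : n ≤ 8))
        push_cast at ht1 ht2 ⊢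
        norm_num at ht1 ht2 ⊢
        calc (n:ℝ) * Real.log 2 ≤ (n:ℝ) * ((7/12) / Real.log 2) :=
              mul_le_mul_of_nonneg_left hL hnpos.le
          _ = (n:ℝ)/(3 * Real.log 2) + (n:ℝ)/2/(2 * Real.log 2) := by
              field_simp; ring
          _ ≤ (n:ℝ)/Real.log n + (n:ℝ)/2/Real.log ((n:ℝ)/2) := add_le_add ht1 ht2
      · -- 9 ≤ n ≤ 12 : three terms
        have hs3 : 3 ≤ s := by rw [hs]; exact Nat.le_sqrt.mpr (by omega)
        refine le_trans ?_ (key 3 hs3)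
        rw [show Finset.Icc (1:ℕ) 3 = {1, 2, 3} from rfl,
          Finset.sum_insert (by norm_num), Finset.sum_pair (by norm_num)]
        have ht1 := tb 1 4 one_pos (by exact_mod_cast (by omega : 1 < n))
          (by push_cast; norm_num; exact_mod_cast (by omega : n ≤ 16))
        have ht2 := tb 2 3 two_pos (by exact_mod_cast (by omega : 2 < n))
          (by push_cast; norm_num; exact_mod_cast (by omega : n ≤ 16))
        have ht3 := tb 3 2 (by norm_num) (by exact_mod_cast (by omega : 3 < n))
          (by push_cast; norm_num; exact_mod_cast (by omega : n ≤ 12))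
        push_cast at ht1 ht2 ht3 ⊢
        norm_num at ht1 ht2 ht3 ⊢
        calc (n:ℝ) * Real.log 2 ≤ (n:ℝ) * ((7/12) / Real.log 2) :=
              mul_le_mul_of_nonneg_left hL hnpos.le
          _ = (n:ℝ)/(4 * Real.log 2) + ((n:ℝ)/2/(3 * Real.log 2)
              + (n:ℝ)/3/(2 * Real.log 2)) := by
              field_simp; ring
          _ ≤ _ := add_le_add ht1 (add_le_add ht2 ht3)
  · -- main case : n ≥ 13
    have hs3 : 3 ≤ s := by rw [hs]; exact Nat.le_sqrt.mpr (by omega)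
    have hS0 : (3:ℝ) ≤ (s:ℝ) := by exact_mod_cast hs3
    have hS1 : (1:ℝ) ≤ 1 + (s:ℝ) := by linarith
    have hub : (n:ℝ) < ((s:ℝ)+1)^2 := by
      have := Nat.lt_succ_sqrt' n
      rw [← hs] at this
      exact_mod_cast this
    have hlb : (s:ℝ)^2 ≤ n := by
      have := Nat.sqrt_le' n
      rw [← hs] at this
      exact_mod_cast this
    have hsrS : (s:ℝ) ≤ Real.sqrt n :=
      (Real.le_sqrt (by positivity) hnpos.le).mpr hlb
    have hsqrt13 : (3.605:ℝ) ≤ Real.sqrt n := by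
      rw [show (3.605:ℝ) = Real.sqrt 12.996025 by
        rw [show (12.996025:ℝ) = 3.605^2 by norm_num, Real.sqrt_sq (by norm_num)]]
      apply Real.sqrt_le_sqrt
      have : (13:ℝ) ≤ n := by exact_mod_cast hbig
      linarith
    have hexp : Real.exp 1 < 2.7182818286 := by linarith [Real.exp_one_lt_d9]
    have hexp1 : (1:ℝ) < Real.exp 1 := by linarith [Real.add_one_le_exp (1:ℝ)]
    have he : Real.exp 1 * (1+(s:ℝ)) ≤ n := by
      have hsq : Real.sqrt n ^ 2 = (n:ℝ) := Real.sq_sqrt hnpos.le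
      nlinarith [Real.exp_pos 1, sq_nonneg (Real.sqrt n - 3.605)]
    set f : ℝ → ℝ := fun x => ((n:ℝ)/x)/Real.log ((n:ℝ)/x) with hf
    have hxmem : ∀ x ∈ Set.Icc (1:ℝ) (1+(s:ℝ)), 0 < x ∧ Real.exp 1 ≤ (n:ℝ)/x := by
      intro x hx
      obtain ⟨hx1, hx2⟩ := hx
      have h0 : (0:ℝ) < x := by linarith
      refine ⟨h0, ?_⟩
      rw [le_div_iff₀ h0]
      calc Real.exp 1 * x ≤ Real.exp 1 * (1+(s:ℝ)) :=
            mul_le_mul_of_nonneg_left hx2 (Real.exp_pos 1).le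
        _ ≤ n := he
    have hant : AntitoneOn f (Set.Icc 1 (1+(s:ℝ))) := by
      intro x hx y hy hxy
      obtain ⟨hx0, hxe⟩ := hxmem x hx
      obtain ⟨hy0, hye⟩ := hxmem y hy
      have huv : (n:ℝ)/y ≤ (n:ℝ)/x := div_le_div_of_nonneg_left hnpos.le hx0 hxy
      have h := Real.log_div_self_antitoneOn (Set.mem_setOf.mpr hye) (Set.mem_setOf.mpr hxe) huv
      have hfx : 0 < Real.log ((n:ℝ)/x) / ((n:ℝ)/x) :=
        div_pos (Real.log_pos (lt_of_lt_of_le hexp1 hxe)) (by positivity)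
      have h2 := inv_anti₀ hfx h
      rw [inv_div, inv_div] at h2
      simpa [hf] using h2
    have hint : IntervalIntegrable f MeasureTheory.volume 1 (1+(s:ℝ)) := by
      apply AntitoneOn.intervalIntegrable
      rwa [Set.uIcc_of_le hS1]
    have hder : ∀ x ∈ Set.uIcc (1:ℝ) (1+(s:ℝ)),
        HasDerivAt (fun x => -((n:ℝ) * Real.log (Real.log ((n:ℝ)/x)))) (f x) x := by
      intro x hx
      rw [Set.uIcc_of_le hS1] at hx
      obtain ⟨hx0, hxe⟩ := hxmem x hx
      have h1x : 1 < (n:ℝ)/x := lt_of_lt_of_le hexp1 hxe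
      have hlx : 0 < Real.log ((n:ℝ)/x) := Real.log_pos h1x
      have h1 : HasDerivAt (fun x : ℝ => (n:ℝ)/x) (-((n:ℝ)/x^2)) x := by
        simpa [div_eq_mul_inv, neg_mul, mul_comm] using (hasDerivAt_inv hx0.ne').const_mul (n:ℝ)
      have h2 := (Real.hasDerivAt_log (by positivity : (0:ℝ) < (n:ℝ)/x).ne').comp x h1
      have h2' : HasDerivAt (fun x : ℝ => Real.log ((n:ℝ)/x)) (((n:ℝ)/x)⁻¹ * -((n:ℝ)/x^2)) x := by
        exact h2
      have h3 := (Real.hasDerivAt_log hlx.ne').comp x h2'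
      have h3' : HasDerivAt (fun x : ℝ => Real.log (Real.log ((n:ℝ)/x)))
          ((Real.log ((n:ℝ)/x))⁻¹ * (((n:ℝ)/x)⁻¹ * -((n:ℝ)/x^2))) x := by
        exact h3
      have h4 := (h3'.const_mul (n:ℝ)).neg
      refine h4.congr_deriv ?_
      symm
      rw [hf]
      field_simp
    have heval := intervalIntegral.integral_eq_sub_of_hasDerivAt hder hint
    have hcmp := hant.integral_le_sum
    have hsum_eq : ∑ i ∈ Finset.range s, f (1 + (i:ℝ)) =
        ∑ i ∈ Finset.Icc 1 s, ((n : ℝ) / i) / Real.log ((n : ℝ) / i) := by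
      rw [← Finset.Ico_add_one_right_eq_Icc, Finset.sum_Ico_eq_sum_range]
      try simp only [Nat.add_sub_cancel]
      apply Finset.sum_congr rfl
      intro i _
      simp only [hf]
      push_cast
      ring_nf
    have hdivpos : (0:ℝ) < (n:ℝ)/(1+(s:ℝ)) := by positivity
    have hBe : Real.exp 1 ≤ (n:ℝ)/(1+(s:ℝ)) := by
      rw [le_div_iff₀ (by linarith : (0:ℝ) < 1+(s:ℝ))]
      exact he
    have hB : (1:ℝ) ≤ Real.log ((n:ℝ)/(1+(s:ℝ))) :=
      (Real.le_log_iff_exp_le hdivpos).mpr hBe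
    have hA2B : 2 * Real.log ((n:ℝ)/(1+(s:ℝ))) ≤ Real.log n := by
      have h2 : Real.log (((n:ℝ)/(1+(s:ℝ)))^(2:ℕ)) = 2 * Real.log ((n:ℝ)/(1+(s:ℝ))) := by
        rw [Real.log_pow]; norm_num
      rw [← h2]
      apply Real.log_le_log (by positivity)
      rw [div_pow, div_le_iff₀ (by positivity)]
      nlinarith
    have hApos : (0:ℝ) < Real.log n := Real.log_pos (by exact_mod_cast hn)
    have hfinal : Real.log 2 ≤ Real.log (Real.log n) - Real.log (Real.log ((n:ℝ)/(1+(s:ℝ)))) := by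
      rw [← Real.log_div hApos.ne' (by linarith : Real.log ((n:ℝ)/(1+(s:ℝ))) ≠ 0)]
      apply Real.log_le_log (by norm_num)
      rw [le_div_iff₀ (by linarith)]
      linarith
    calc (n:ℝ) * Real.log 2
        ≤ (n:ℝ) * (Real.log (Real.log n) - Real.log (Real.log ((n:ℝ)/(1+(s:ℝ))))) :=
          mul_le_mul_of_nonneg_left hfinal hnpos.le
      _ = -((n:ℝ) * Real.log (Real.log ((n:ℝ)/(1+(s:ℝ)))))
          - -((n:ℝ) * Real.log (Real.log ((n:ℝ)/1))) := by rw [div_one]; ring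
      _ = ∫ x in (1:ℝ)..(1+(s:ℝ)), f x := heval.symm
      _ ≤ ∑ i ∈ Finset.range s, f (1 + (i:ℝ)) := hcmp
      _ = ∑ i ∈ Finset.Icc 1 s, ((n : ℝ) / i) / Real.log ((n : ℝ) / i) := hsum_eq
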